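/- arXiv:2503.08038 — 4 statements merged into one kernel-verified Lean document; each statement's English description precedes it below -/
import Mathlib

section
/- Let C ≥ 1 and fix o_n ∈ ℝ^C. Define h : ℝ^C → ℝ by h(o_m) = L_KL(o_m, o_n). Then for every o_m ∈ ℝ^C and every index i, ∂h/∂(o_m)_i = Σ_{j=1}^C w^{i,j} · (Δ(o_m)_{i,j} − Δ(o_n)_{i,j}), where w^{i,j} = softmax(o_m)_i · softmax(o_m)_j. -/
open Real

/-- softmax of logits `o : Fin C → ℝ`. -/
noncomputable def softmax {C : ℕ} (o : Fin C → ℝ) (j : Fin C) : ℝ :=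
  Real.exp (o j) / ∑ k, Real.exp (o k)

/-- KL divergence loss between logits `o_m`, `o_n`. -/
noncomputable def LKL {C : ℕ} (om oN : Fin C → ℝ) : ℝ :=
  ∑ j, softmax om j * Real.log (softmax om j / softmax oN j)

/-- Partial derivative of `o_m ↦ L_KL(o_m, o_n)`:
`∂/∂(o_m)_i = ∑ j, w^{i,j} ((Δ o_m)_{i,j} - (Δ o_n)_{i,j})`
with `w^{i,j} = softmax(o_m)_i * softmax(o_m)_j` and `Δ(o)_{j,k} = o_j - o_k`. -/
theorem kl_partial_deriv_first (C : ℕ) (hC : 1 ≤ C) (om oN : Fin C → ℝ) (i : Fin C) :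
    HasDerivAt (fun t => LKL (Function.update om i t) oN)
      (∑ j, (softmax om i * softmax om j) * ((om i - om j) - (oN i - oN j))) (om i) := by
  have hne : Nonempty (Fin C) := Fin.pos_iff_nonempty.mp hC
  have hpos : ∀ o : Fin C → ℝ, 0 < ∑ k, Real.exp (o k) := fun o =>
    Finset.sum_pos (fun k _ => Real.exp_pos _) Finset.univ_nonempty
  have hTpos := hpos oN
  set T := ∑ k, Real.exp (oN k) with hT
  set A := ∑ k ∈ Finset.univ.erase i, Real.exp (om k) with hAdef
  have hA : 0 ≤ A := Finset.sum_nonneg fun k _ => (Real.exp_pos _).le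
  set B := ∑ k ∈ Finset.univ.erase i, Real.exp (om k) * (om k - oN k) with hBdef
  have hsum : ∀ t : ℝ, ∑ k, Real.exp (Function.update om i t k) = A + Real.exp t := by
    intro t
    rw [← Finset.add_sum_erase _ _ (Finset.mem_univ i), Function.update_self, add_comm]
    congr 1
    exact Finset.sum_congr rfl fun k hk => by
      rw [Function.update_of_ne (Finset.ne_of_mem_erase hk)]
  have hStpos : ∀ t : ℝ, 0 < A + Real.exp t := fun t => by positivity
  have hfun : ∀ t, LKL (Function.update om i t) oN =
      (B + Real.exp t * (t - oN i)) / (A + Real.exp t)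
        - Real.log (A + Real.exp t) + Real.log T := by
    intro t
    unfold LKL softmax
    simp only [hsum t]
    have hSt0 : A + Real.exp t ≠ 0 := (hStpos t).ne'
    have hnum : ∑ j, Real.exp (Function.update om i t j) * (Function.update om i t j - oN j)
        = B + Real.exp t * (t - oN i) := by
      rw [← Finset.add_sum_erase _ _ (Finset.mem_univ i), Function.update_self, add_comm]
      congr 1
      exact Finset.sum_congr rfl fun k hk => by
        rw [Function.update_of_ne (Finset.ne_of_mem_erase hk)]
    calc ∑ j, Real.exp (Function.update om i t j) / (A + Real.exp t) *
            Real.log ((Real.exp (Function.update om i t j) / (A + Real.exp t)) /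
              (Real.exp (oN j) / T))
        = ∑ j, ((Real.exp (Function.update om i t j) * (Function.update om i t j - oN j))
              / (A + Real.exp t)
            + (Real.log T - Real.log (A + Real.exp t)) *
              (Real.exp (Function.update om i t j) / (A + Real.exp t))) := by
          refine Finset.sum_congr rfl fun j _ => ?_
          rw [Real.log_div (by positivity) (by positivity),
            Real.log_div (Real.exp_ne_zero _) hSt0,
            Real.log_div (Real.exp_ne_zero _) hTpos.ne', Real.log_exp, Real.log_exp]
          field_simp
          ring
      _ = (∑ j, Real.exp (Function.update om i t j) * (Function.update om i t j - oN j))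
              / (A + Real.exp t)
            + (Real.log T - Real.log (A + Real.exp t)) *
              ((∑ j, Real.exp (Function.update om i t j)) / (A + Real.exp t)) := by
          rw [Finset.sum_add_distrib, ← Finset.sum_div, ← Finset.mul_sum, ← Finset.sum_div]
      _ = (B + Real.exp t * (t - oN i)) / (A + Real.exp t)
            - Real.log (A + Real.exp t) + Real.log T := by
          rw [hsum t, div_self hSt0, hnum]; ring
  have hx := om i
  set x := om i with hxdef
  have hS0 : A + Real.exp x ≠ 0 := (hStpos x).ne'
  have h1 : HasDerivAt (fun t : ℝ => B + Real.exp t * (t - oN i))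
      (Real.exp x * (x - oN i) + Real.exp x) x := by
    have := (Real.hasDerivAt_exp x).mul ((hasDerivAt_id x).sub_const (oN i))
    simpa using this.const_add B
  have h2 : HasDerivAt (fun t : ℝ => A + Real.exp t) (Real.exp x) x :=
    (Real.hasDerivAt_exp x).const_add A
  have key : HasDerivAt (fun t => (B + Real.exp t * (t - oN i)) / (A + Real.exp t)
        - Real.log (A + Real.exp t) + Real.log T)
      (((Real.exp x * (x - oN i) + Real.exp x) * (A + Real.exp x)
          - (B + Real.exp x * (x - oN i)) * Real.exp x) / (A + Real.exp x) ^ 2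
        - Real.exp x / (A + Real.exp x)) x := by
    exact ((h1.div h2 hS0).sub (h2.log hS0)).add_const (Real.log T)
  have hgoalfun : (fun t => LKL (Function.update om i t) oN)
      = fun t => (B + Real.exp t * (t - oN i)) / (A + Real.exp t)
        - Real.log (A + Real.exp t) + Real.log T := funext hfun
  rw [hgoalfun]
  convert key using 1
  -- now show the sum equals the computed derivative
  have hSA : (∑ k, Real.exp (om k)) = A + Real.exp x := by
    have := hsum x
    simpa [hxdef, Function.update_eq_self] using this
  have hNval : ∑ j, Real.exp (om j) * (om j - oN j) = B + Real.exp x * (x - oN i) := by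
    rw [← Finset.add_sum_erase _ _ (Finset.mem_univ i)]
    ring
  unfold softmax
  rw [hSA]
  have step : ∀ j : Fin C,
      (Real.exp x / (A + Real.exp x)) * (Real.exp (om j) / (A + Real.exp x)) *
          ((x - om j) - (oN i - oN j))
        = Real.exp x / (A + Real.exp x) ^ 2 *
            (Real.exp (om j) * (x - oN i) - Real.exp (om j) * (om j - oN j)) := by
    intro j
    field_simp
    ring
  calc ∑ j, (Real.exp x / (A + Real.exp x)) * (Real.exp (om j) / (A + Real.exp x)) *
          ((x - om j) - (oN i - oN j))
      = Real.exp x / (A + Real.exp x) ^ 2 *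
          (∑ j, (Real.exp (om j) * (x - oN i) - Real.exp (om j) * (om j - oN j))) := by
        rw [Finset.mul_sum]
        exact Finset.sum_congr rfl fun j _ => step j
    _ = Real.exp x / (A + Real.exp x) ^ 2 *
          ((A + Real.exp x) * (x - oN i) - (B + Real.exp x * (x - oN i))) := by
        rw [Finset.sum_sub_distrib, ← Finset.sum_mul, hNval, hSA]
    _ = ((Real.exp x * (x - oN i) + Real.exp x) * (A + Real.exp x)
          - (B + Real.exp x * (x - oN i)) * Real.exp x) / (A + Real.exp x) ^ 2
        - Real.exp x / (A + Real.exp x) := by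
        field_simp
        ring
end

section
/- Let C ≥ 1 and fix o_n ∈ ℝ^C. Define h : ℝ^C → ℝ by h(o_m) = L_KL(o_m, o_n). Then for every o_m ∈ ℝ^C and every index i, ∂h/∂(o_m)_i = softmax(o_m)_i · ( log(softmax(o_m)_i / softmax(o_n)_i) − L_KL(o_m, o_n) ). -/
open Real

set_option maxHeartbeats 1000000 in
/-- Partial derivative of `o_m ↦ L_KL(o_m, o_n)` in the alternative form
`∂/∂(o_m)_i = softmax(o_m)_i ⬝ (log(softmax(o_m)_i / softmax(o_n)_i) − L_KL(o_m, o_n))`. -/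
theorem kl_partial_deriv_first_alt (C : ℕ) (hC : 1 ≤ C) (om oN : Fin C → ℝ) (i : Fin C) :
    HasDerivAt (fun t => LKL (Function.update om i t) oN)
      (softmax om i * (Real.log (softmax om i / softmax oN i) - LKL om oN)) (om i) := by
  haveI : NeZero C := ⟨by omega⟩
  have hne : (Finset.univ : Finset (Fin C)).Nonempty := Finset.univ_nonempty
  set A : ℝ := ∑ k, Real.exp (om k) with hA
  have hApos : 0 < A := Finset.sum_pos (fun k _ => Real.exp_pos _) hne
  set E : ℝ → ℝ := fun t => ∑ k, Real.exp (Function.update om i t k) with hEdef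
  have hEpos : ∀ t, 0 < E t := fun t =>
    Finset.sum_pos (fun k _ => Real.exp_pos _) hne
  have hEi : E (om i) = A := by
    simp [hEdef, Function.update_eq_self, hA]
  -- derivative of E
  have hE : HasDerivAt E (Real.exp (om i)) (om i) := by
    have h1 : ∀ k ∈ (Finset.univ : Finset (Fin C)),
        HasDerivAt (fun t => Real.exp (Function.update om i t k))
          (if k = i then Real.exp (om i) else 0) (om i) := by
      intro k _
      by_cases hk : k = i
      · subst hk
        rw [if_pos rfl]
        simpa using Real.hasDerivAt_exp (om k)
      · simp only [Function.update_of_ne hk, if_neg hk]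
        exact hasDerivAt_const _ _
    have := HasDerivAt.fun_sum h1
    simpa using this
  -- positivity of softmax oN
  have hBpos : 0 < ∑ k, Real.exp (oN k) := Finset.sum_pos (fun k _ => Real.exp_pos _) hne
  have hqpos : ∀ j, 0 < softmax oN j := fun j => div_pos (Real.exp_pos _) hBpos
  have hspos : ∀ j, 0 < softmax om j := fun j => div_pos (Real.exp_pos _) hApos
  -- per-term derivative
  set δ : Fin C → ℝ := fun j => if j = i then 1 else 0 with hδ
  have hterm : ∀ j ∈ (Finset.univ : Finset (Fin C)),
      HasDerivAt (fun t => softmax (Function.update om i t) j *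
          Real.log (softmax (Function.update om i t) j / softmax oN j))
        (softmax om j * (δ j - softmax om i) *
          (Real.log (softmax om j / softmax oN j) + 1)) (om i) := by
    intro j _
    -- rewrite the function
    have hfun : (fun t => softmax (Function.update om i t) j *
          Real.log (softmax (Function.update om i t) j / softmax oN j)) =
        fun t => (Real.exp (Function.update om i t j) / E t) *
          ((Function.update om i t j) - Real.log (E t) - Real.log (softmax oN j)) := by
      funext t
      have h1 : softmax (Function.update om i t) j =
          Real.exp (Function.update om i t j) / E t := rfl
      rw [h1, Real.log_div (div_pos (Real.exp_pos _) (hEpos t)).ne' (hqpos j).ne',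
        Real.log_div (Real.exp_ne_zero _) (hEpos t).ne', Real.log_exp]
    rw [hfun]
    -- derivative of update at j
    have hu : HasDerivAt (fun t => Function.update om i t j) (δ j) (om i) := by
      by_cases hj : j = i
      · subst hj
        simp only [hδ, if_pos rfl]
        simpa using hasDerivAt_id' (om j)
      · simp only [Function.update_of_ne hj, hδ, if_neg hj]
        exact hasDerivAt_const _ _
    have huval : Function.update om i (om i) j = om j := by
      simp [Function.update_eq_self]
    have hG : HasDerivAt (fun t => Real.exp (Function.update om i t j) / E t)
        ((Real.exp (om j) * δ j * A - Real.exp (om j) * Real.exp (om i)) / A ^ 2) (om i) := by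
      have h2 := (hu.exp).div hE (hEpos (om i)).ne'
      rw [huval, hEi] at h2
      exact h2
    have hH : HasDerivAt (fun t => (Function.update om i t j) - Real.log (E t)
        - Real.log (softmax oN j)) (δ j - Real.exp (om i) / A) (om i) := by
      have h3 := (hu.sub ((hE.log (hEpos (om i)).ne'))).sub_const (Real.log (softmax oN j))
      rw [hEi] at h3
      exact h3
    have := hG.mul hH
    have hval : (Real.exp (om j) * δ j * A - Real.exp (om j) * Real.exp (om i)) / A ^ 2 *
          (Function.update om i (om i) j - Real.log (E (om i)) - Real.log (softmax oN j))
        + Real.exp (Function.update om i (om i) j) / E (om i) * (δ j - Real.exp (om i) / A)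
        = softmax om j * (δ j - softmax om i) *
          (Real.log (softmax om j / softmax oN j) + 1) := by
      rw [huval, hEi]
      have hlog : Real.log (softmax om j / softmax oN j)
          = om j - Real.log A - Real.log (softmax oN j) := by
        rw [Real.log_div (hspos j).ne' (hqpos j).ne']
        have : Real.log (softmax om j) = om j - Real.log A := by
          rw [show softmax om j = Real.exp (om j) / A from rfl,
            Real.log_div (Real.exp_ne_zero _) hApos.ne', Real.log_exp]
        rw [this]
      rw [hlog]
      have hsj : softmax om j = Real.exp (om j) / A := rfl
      have hsi : softmax om i = Real.exp (om i) / A := rfl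
      rw [hsj, hsi]
      field_simp
    rw [hval] at this
    exact this
  have hsum := HasDerivAt.fun_sum hterm
  have hLKL : (fun t => LKL (Function.update om i t) oN) =
      fun t => ∑ j, softmax (Function.update om i t) j *
        Real.log (softmax (Function.update om i t) j / softmax oN j) := rfl
  rw [hLKL]
  -- now identify the derivative values
  have hsum1 : ∑ j, softmax om j = 1 := by
    simp only [softmax, ← Finset.sum_div]
    exact div_self hApos.ne'
  have hfinal : ∑ j, softmax om j * (δ j - softmax om i) *
        (Real.log (softmax om j / softmax oN j) + 1)
      = softmax om i * (Real.log (softmax om i / softmax oN i) - LKL om oN) := by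
    have hexpand : ∀ j, softmax om j * (δ j - softmax om i) *
          (Real.log (softmax om j / softmax oN j) + 1)
        = δ j * (softmax om j * (Real.log (softmax om j / softmax oN j) + 1))
          - softmax om i * (softmax om j * Real.log (softmax om j / softmax oN j))
          - softmax om i * softmax om j := by
      intro j; ring
    rw [Finset.sum_congr rfl (fun j _ => hexpand j)]
    rw [Finset.sum_sub_distrib, Finset.sum_sub_distrib]
    rw [← Finset.mul_sum, ← Finset.mul_sum, hsum1]
    have hite : ∑ j, δ j * (softmax om j * (Real.log (softmax om j / softmax oN j) + 1))
        = softmax om i * (Real.log (softmax om i / softmax oN i) + 1) := by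
      simp only [hδ, ite_mul, one_mul, zero_mul]
      simp [Finset.sum_ite_eq' Finset.univ i
        (fun x => softmax om x * (Real.log (softmax om x / softmax oN x) + 1))]
    rw [hite, show (∑ j, softmax om j * Real.log (softmax om j / softmax oN j)) = LKL om oN
      from rfl]
    ring
  rw [← hfinal]
  exact hsum
end

section
/- (Equivalence of KL and DKL gradients.) Let C ≥ 1 and fix a point (a, b) ∈ ℝ^C × ℝ^C. Write s_a = softmax(a), and set w_{j,k} = (s_a)_j · (s_a)_k. Define the frozen wMSE function F(x) = (1/4) · Σ_{j,k=1}^C w_{j,k} · (Δ(x)_{j,k} − Δ(b)_{j,k})² and the frozen cross-entropy function G(y) = −Σ_{j=1}^C (s_a)_j · log softmax(y)_j, where w, Δ(b), and s_a are constants determined by the point (a, b). Then for every index i: (1) the partial derivative of o_m ↦ L_KL(o_m, b) at o_m = a in coordinate i equals ∂F/∂x_i evaluated at x = a; and (2) the partial derivative of o_n ↦ L_KL(a, o_n) at o_n = b in coordinate i equals ∂G/∂y_i evaluated at y = b. Hence the DKL loss with α = 1, β = 1 and weight √(w) produces exactly the same gradients on both logit arguments as the KL loss. -/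
open Real

variable {C : ℕ}

lemma sumexp_pos (hC : 1 ≤ C) (o : Fin C → ℝ) : 0 < ∑ k, Real.exp (o k) := by
  have : Nonempty (Fin C) := ⟨⟨0, hC⟩⟩
  exact Finset.sum_pos (fun k _ => Real.exp_pos _) Finset.univ_nonempty

lemma softmax_pos (hC : 1 ≤ C) (o : Fin C → ℝ) (j : Fin C) : 0 < softmax o j :=
  div_pos (Real.exp_pos _) (sumexp_pos hC o)

lemma sum_softmax (hC : 1 ≤ C) (o : Fin C → ℝ) : ∑ j, softmax o j = 1 := by
  unfold softmax
  rw [← Finset.sum_div, div_self (sumexp_pos hC o).ne']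

lemma log_softmax (hC : 1 ≤ C) (o : Fin C → ℝ) (j : Fin C) :
    Real.log (softmax o j) = o j - Real.log (∑ k, Real.exp (o k)) := by
  unfold softmax
  rw [Real.log_div (Real.exp_ne_zero _) (sumexp_pos hC o).ne', Real.log_exp]

lemma sum_delta (i : Fin C) (g : Fin C → ℝ) :
    ∑ j, (if j = i then (1:ℝ) else 0) * g j = g i := by
  simp [ite_mul, Finset.sum_ite_eq']

lemma hasDerivAt_upd (a : Fin C → ℝ) (i j : Fin C) (t0 : ℝ) :
    HasDerivAt (fun t => Function.update a i t j) (if j = i then (1:ℝ) else 0) t0 := by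
  rcases eq_or_ne j i with h | h
  · subst h; simp only [Function.update_self, if_pos rfl]; exact hasDerivAt_id t0
  · simp only [Function.update_of_ne h, if_neg h]; exact hasDerivAt_const _ _

lemma hasDerivAt_sumexp (a : Fin C → ℝ) (i : Fin C) (t0 : ℝ) :
    HasDerivAt (fun t => ∑ k, Real.exp (Function.update a i t k)) (Real.exp t0) t0 := by
  have h : ∀ k ∈ Finset.univ, HasDerivAt (fun t => Real.exp (Function.update a i t k))
      (if k = i then Real.exp t0 else 0) t0 := by
    intro k _
    rcases eq_or_ne k i with h | h
    · subst h; simp only [Function.update_self, if_pos rfl]; exact Real.hasDerivAt_exp t0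
    · simp only [Function.update_of_ne h, if_neg h]; exact hasDerivAt_const _ _
  have := HasDerivAt.fun_sum h
  simpa [Finset.sum_ite_eq'] using this

lemma hasDerivAt_softmax (hC : 1 ≤ C) (a : Fin C → ℝ) (i j : Fin C) :
    HasDerivAt (fun t => softmax (Function.update a i t) j)
      (softmax a j * ((if j = i then (1:ℝ) else 0) - softmax a i)) (a i) := by
  have hZ : (0:ℝ) < ∑ k, Real.exp (a k) := sumexp_pos hC a
  have hN : HasDerivAt (fun t => Real.exp (Function.update a i t j))
      ((if j = i then (1:ℝ) else 0) * Real.exp (a j)) (a i) := by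
    rcases eq_or_ne j i with h | h
    · subst h
      simpa using Real.hasDerivAt_exp (a j)
    · simp only [Function.update_of_ne h, if_neg h, zero_mul]; exact hasDerivAt_const _ _
  have hE := hasDerivAt_sumexp a i (a i)
  have hEa : ∑ k, Real.exp (Function.update a i (a i) k) = ∑ k, Real.exp (a k) := by
    simp [Function.update_eq_self]
  have hD := hN.div hE (by simpa [Function.update_eq_self] using hZ.ne')
  have : (fun t => Real.exp (Function.update a i t j) / ∑ k, Real.exp (Function.update a i t k))
      = fun t => softmax (Function.update a i t) j := rfl
  change HasDerivAt (fun t => softmax (Function.update a i t) j) _ _ at hD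
  convert hD using 1
  simp only [Function.update_eq_self]
  unfold softmax
  field_simp

lemma hasDerivAt_f1 (hC : 1 ≤ C) (a b : Fin C → ℝ) (i : Fin C) :
    HasDerivAt (fun t => LKL (Function.update a i t) b)
      (∑ j, (softmax a j * ((if j = i then (1:ℝ) else 0) - softmax a i)) *
          ((Real.log (softmax a j) - Real.log (softmax b j)) + 1)) (a i) := by
  have hrw : (fun t => LKL (Function.update a i t) b)
      = fun t => ∑ j, softmax (Function.update a i t) j *
          (Real.log (softmax (Function.update a i t) j) - Real.log (softmax b j)) := by
    funext t; unfold LKL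
    refine Finset.sum_congr rfl fun j _ => ?_
    rw [Real.log_div (softmax_pos hC _ j).ne' (softmax_pos hC b j).ne']
  rw [hrw]
  refine HasDerivAt.fun_sum fun j _ => ?_
  have hP := hasDerivAt_softmax hC a i j
  have hpos : softmax (Function.update a i (a i)) j ≠ 0 := by
    simp only [Function.update_eq_self]; exact (softmax_pos hC a j).ne'
  have hL := (hP.log hpos).sub_const (Real.log (softmax b j))
  have hmul := hP.fun_mul hL
  refine hmul.congr_deriv ?_
  simp only [Function.update_eq_self]
  field_simp [(softmax_pos hC a j).ne']

lemma hasDerivAt_F (hC : 1 ≤ C) (a b : Fin C → ℝ) (i : Fin C) :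
    HasDerivAt (fun t => (1 / 4 : ℝ) * ∑ j, ∑ k,
        (softmax a j * softmax a k) *
          (((Function.update a i t) j - (Function.update a i t) k) - (b j - b k)) ^ 2)
      ((1 / 4 : ℝ) * ∑ j, ∑ k, (softmax a j * softmax a k) *
          (2 * ((a j - a k) - (b j - b k)) *
            ((if j = i then (1:ℝ) else 0) - (if k = i then (1:ℝ) else 0)))) (a i) := by
  refine HasDerivAt.const_mul _ (HasDerivAt.fun_sum fun j _ => HasDerivAt.fun_sum fun k _ => ?_)
  have h := (((hasDerivAt_upd a i j (a i)).sub (hasDerivAt_upd a i k (a i))).sub_const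
      (b j - b k)).fun_pow 2
  have hmul := h.const_mul (softmax a j * softmax a k)
  refine hmul.congr_deriv ?_
  simp only [Pi.sub_apply, Function.update_eq_self]
  ring

lemma double_delta (i : Fin C) (Y : Fin C → Fin C → ℝ) :
    ∑ j, ∑ k, (((if j = i then (1:ℝ) else 0) - (if k = i then (1:ℝ) else 0)) * Y j k)
      = (∑ k, Y i k) - ∑ j, Y j i := by
  have h1 : ∀ j, ∑ k, (((if j = i then (1:ℝ) else 0) - (if k = i then (1:ℝ) else 0)) * Y j k)
      = (if j = i then (1:ℝ) else 0) * (∑ k, Y j k) - Y j i := by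
    intro j
    rw [Finset.mul_sum, ← sum_delta i (fun k => Y j k), ← Finset.sum_sub_distrib]
    exact Finset.sum_congr rfl fun k _ => by ring
  rw [Finset.sum_congr rfl (fun j _ => h1 j), Finset.sum_sub_distrib, sum_delta]

/-- Equivalence of KL and DKL gradients at a fixed point `(a, b)`.
With `s_a = softmax a`, `w_{j,k} = (s_a)_j (s_a)_k` frozen, the frozen wMSE
`F(x) = (1/4) ∑_{j,k} w_{j,k} ((x_j - x_k) - (b_j - b_k))²` has the same partial
derivatives at `x = a` as `o_m ↦ L_KL(o_m, b)`, and the frozen cross-entropy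
`G(y) = -∑ j, (s_a)_j log (softmax y)_j` has the same partial derivatives at
`y = b` as `o_n ↦ L_KL(a, o_n)`. -/
theorem kl_dkl_gradient_equivalence (C : ℕ) (hC : 1 ≤ C) (a b : Fin C → ℝ) (i : Fin C) :
    (deriv (fun t => LKL (Function.update a i t) b) (a i)
      = deriv
          (fun t => (1 / 4 : ℝ) * ∑ j, ∑ k,
            (softmax a j * softmax a k) *
              (((Function.update a i t) j - (Function.update a i t) k) - (b j - b k)) ^ 2)
          (a i)) ∧
    (deriv (fun t => LKL a (Function.update b i t)) (b i)
      = deriv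
          (fun t => -∑ j, softmax a j * Real.log (softmax (Function.update b i t) j))
          (b i)) := by
  constructor
  · rw [(hasDerivAt_f1 hC a b i).deriv, (hasDerivAt_F hC a b i).deriv]
    set c : ℝ := 1 - Real.log (∑ k, Real.exp (a k)) + Real.log (∑ k, Real.exp (b k)) with hc
    set T : ℝ := ∑ j, softmax a j * (a j - b j) with hTdef
    have hp1 := sum_softmax hC a
    -- LHS
    have hL : ∑ j, (softmax a j * ((if j = i then (1:ℝ) else 0) - softmax a i)) *
          ((Real.log (softmax a j) - Real.log (softmax b j)) + 1)
        = softmax a i * ((a i - b i) + c) - softmax a i * (T + c) := by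
      have e1 : ∀ j ∈ Finset.univ, (softmax a j * ((if j = i then (1:ℝ) else 0) - softmax a i)) *
            ((Real.log (softmax a j) - Real.log (softmax b j)) + 1)
          = (if j = i then (1:ℝ) else 0) * (softmax a j * ((a j - b j) + c))
            - softmax a i * (softmax a j * ((a j - b j) + c)) := by
        intro j _
        rw [log_softmax hC a j, log_softmax hC b j, hc]
        ring
      rw [Finset.sum_congr rfl e1, Finset.sum_sub_distrib, sum_delta, ← Finset.mul_sum]
      have hT : ∑ j, softmax a j * ((a j - b j) + c) = T + c := by
        have e2 : ∀ j ∈ Finset.univ, softmax a j * ((a j - b j) + c)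
            = softmax a j * (a j - b j) + softmax a j * c := fun j _ => by ring
        rw [Finset.sum_congr rfl e2, Finset.sum_add_distrib, ← Finset.sum_mul, hp1, one_mul,
          hTdef]
      rw [hT]
    rw [hL]
    -- RHS
    have e3 : ∀ j ∈ Finset.univ, ∀ k ∈ Finset.univ,
        (softmax a j * softmax a k) * (2 * ((a j - a k) - (b j - b k)) *
          ((if j = i then (1:ℝ) else 0) - (if k = i then (1:ℝ) else 0)))
        = ((if j = i then (1:ℝ) else 0) - (if k = i then (1:ℝ) else 0)) *
            (softmax a j * softmax a k * (2 * ((a j - a k) - (b j - b k)))) := by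
      intro j _ k _; ring
    rw [Finset.sum_congr rfl (fun j hj => Finset.sum_congr rfl (e3 j hj)), double_delta]
    set Y : Fin C → Fin C → ℝ :=
      fun j k => softmax a j * softmax a k * (2 * ((a j - a k) - (b j - b k))) with hY
    have hanti : ∑ j, Y j i = -∑ k, Y i k := by
      rw [← Finset.sum_neg_distrib]
      exact Finset.sum_congr rfl fun j _ => by rw [hY]; ring
    have hS : ∑ k, Y i k = 2 * softmax a i * ((a i - b i) - T) := by
      have e4 : ∀ k ∈ Finset.univ, Y i k
          = 2 * softmax a i * (softmax a k * (a i - b i)) -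
            2 * softmax a i * (softmax a k * (a k - b k)) := by
        intro k _; rw [hY]; ring
      rw [Finset.sum_congr rfl e4, Finset.sum_sub_distrib, ← Finset.mul_sum, ← Finset.mul_sum,
        ← Finset.sum_mul, hp1, one_mul, hTdef]
      ring
    rw [hanti, hS]
    ring
  · have hG : (fun t => LKL a (Function.update b i t))
        = fun t => (∑ j, softmax a j * Real.log (softmax a j))
            + -∑ j, softmax a j * Real.log (softmax (Function.update b i t) j) := by
      funext t
      unfold LKL
      rw [← sub_eq_add_neg, ← Finset.sum_sub_distrib]
      refine Finset.sum_congr rfl fun j _ => ?_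
      rw [Real.log_div (softmax_pos hC a j).ne' (softmax_pos hC _ j).ne', mul_sub]
    rw [hG, deriv_const_add]
end

section
/- Let C ≥ 1, α, β ∈ ℝ, let v ∈ ℝ^{C×C} be symmetric, let c ∈ ℝ^{C×C} be antisymmetric, and let p ∈ ℝ^C be a probability vector (nonnegative entries summing to 1). Define L : ℝ^C → ℝ by L(y) = (α/4) · Σ_{j,k=1}^C v_{j,k} · (c_{j,k} − Δ(y)_{j,k})² − β · Σ_{j=1}^C p_j · log softmax(y)_j. Then for every y ∈ ℝ^C and every index i, ∂L/∂y_i = α · Σ_{j=1}^C v_{i,j} · (Δ(y)_{i,j} − c_{i,j}) + β · (softmax(y)_i − p_i). -/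
open Real

/-- Gradient of the GKL loss with respect to the student logits `y`:
for `L(y) = (α/4) ∑_{j,k} v_{j,k} (c_{j,k} - (y_j - y_k))² - β ∑ j, p_j log (softmax y)_j`
with symmetric `v`, antisymmetric `c`, and probability vector `p` all fixed,
`∂L/∂y_i = α ∑ j, v_{i,j} ((y_i - y_j) - c_{i,j}) + β (softmax(y)_i - p_i)`. -/
theorem gkl_partial_deriv (C : ℕ) (hC : 1 ≤ C) (α β : ℝ)
    (v : Fin C → Fin C → ℝ) (hv : ∀ j k, v j k = v k j)
    (c : Fin C → Fin C → ℝ) (hc : ∀ j k, c j k = -c k j)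
    (p : Fin C → ℝ) (hp0 : ∀ j, 0 ≤ p j) (hp1 : ∑ j, p j = 1)
    (y : Fin C → ℝ) (i : Fin C) :
    HasDerivAt
      (fun t => (α / 4) * (∑ j, ∑ k,
          v j k * (c j k - ((Function.update y i t) j - (Function.update y i t) k)) ^ 2)
        - β * ∑ j, p j * Real.log (softmax (Function.update y i t) j))
      (α * (∑ j, v i j * ((y i - y j) - c i j)) + β * (softmax y i - p i)) (y i) := by
  classical
  have hne : Nonempty (Fin C) := ⟨⟨0, hC⟩⟩
  have hSpos : ∀ u : Fin C → ℝ, (0:ℝ) < ∑ k, Real.exp (u k) := fun u =>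
    Finset.sum_pos (fun k _ => Real.exp_pos _) Finset.univ_nonempty
  -- rewrite the log-softmax part
  have hfun : (fun t => (α / 4) * (∑ j, ∑ k,
          v j k * (c j k - ((Function.update y i t) j - (Function.update y i t) k)) ^ 2)
        - β * ∑ j, p j * Real.log (softmax (Function.update y i t) j))
      = (fun t => (α / 4) * (∑ j, ∑ k,
          v j k * (c j k - ((Function.update y i t) j - (Function.update y i t) k)) ^ 2)
        - β * ((∑ j, p j * (Function.update y i t) j)
            - Real.log (∑ k, Real.exp ((Function.update y i t) k)))) := by
    funext t
    congr 1
    congr 1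
    have h1 : ∀ j : Fin C, p j * Real.log (softmax (Function.update y i t) j)
        = p j * (Function.update y i t j)
          - p j * Real.log (∑ k, Real.exp ((Function.update y i t) k)) := by
      intro j
      rw [softmax, Real.log_div (Real.exp_ne_zero _) (ne_of_gt (hSpos _)), Real.log_exp]
      ring
    rw [Finset.sum_congr rfl (fun j _ => h1 j), Finset.sum_sub_distrib, ← Finset.sum_mul,
      hp1, one_mul]
  rw [hfun]
  -- derivative of each coordinate of update
  have hu : ∀ j : Fin C, HasDerivAt (fun t => Function.update y i t j)
      (if j = i then (1:ℝ) else 0) (y i) := by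
    intro j
    by_cases h : j = i
    · subst h
      simpa [Function.update_self] using (hasDerivAt_id' (y j))
    · simpa [Function.update_of_ne h, h] using (hasDerivAt_const (y i) (y j))
  -- quadratic part
  have hq : ∀ j k : Fin C, HasDerivAt
      (fun t => v j k * (c j k - (Function.update y i t j - Function.update y i t k)) ^ 2)
      ((2 * v j k * (c j k - (y j - y k))) * (if k = i then (1:ℝ) else 0)
        - (if j = i then (1:ℝ) else 0) * (2 * v j k * (c j k - (y j - y k))))
      (y i) := by
    intro j k
    have h1 := (((hasDerivAt_const (y i) (c j k)).sub ((hu j).sub (hu k))).pow 2).const_mul (v j k)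
    refine h1.congr_deriv ?_
    by_cases hk : k = i <;> by_cases hj : j = i <;>
      simp [hk, hj, Function.update_eq_self] <;> ring
  have hA := (HasDerivAt.fun_sum (fun j (_ : j ∈ Finset.univ) =>
      HasDerivAt.fun_sum (fun k (_ : k ∈ Finset.univ) => hq j k))).const_mul (α / 4)
  -- linear part
  have hlin := HasDerivAt.fun_sum (fun j (_ : j ∈ Finset.univ) => (hu j).const_mul (p j))
  -- log-sum-exp part
  have hexp : ∀ k : Fin C, HasDerivAt (fun t => Real.exp (Function.update y i t k))
      (Real.exp (y k) * (if k = i then (1:ℝ) else 0)) (y i) := by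
    intro k
    have := (hu k).exp
    simpa [Function.update_eq_self] using this
  have hsum := HasDerivAt.fun_sum (fun k (_ : k ∈ Finset.univ) => hexp k)
  have hlog : HasDerivAt (fun t => Real.log (∑ k, Real.exp (Function.update y i t k)))
      ((∑ k, Real.exp (y k) * (if k = i then (1:ℝ) else 0)) / ∑ k, Real.exp (y k)) (y i) := by
    have h := hsum.log ?_
    · convert h using 2
      simp [Function.update_eq_self]
    · simp only [Function.update_eq_self]
      exact ne_of_gt (hSpos y)
  have hB := (hlin.sub hlog).const_mul β
  have hT := hA.sub hB
  refine hT.congr_deriv ?_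
  have key : (∑ j, ∑ k, ((2 * v j k * (c j k - (y j - y k))) * (if k = i then (1:ℝ) else 0)
        - (if j = i then (1:ℝ) else 0) * (2 * v j k * (c j k - (y j - y k)))))
      = 4 * ∑ j, v i j * ((y i - y j) - c i j) := by
    have h1 : ∀ j : Fin C, (∑ k, ((2 * v j k * (c j k - (y j - y k))) * (if k = i then (1:ℝ) else 0)
        - (if j = i then (1:ℝ) else 0) * (2 * v j k * (c j k - (y j - y k)))))
        = 2 * v j i * (c j i - (y j - y i))
          - (if j = i then (1:ℝ) else 0) * (∑ k, 2 * v j k * (c j k - (y j - y k))) := by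
      intro j
      rw [Finset.sum_sub_distrib, ← Finset.mul_sum]
      congr 1
      simp
    rw [Finset.sum_congr rfl (fun j _ => h1 j), Finset.sum_sub_distrib]
    simp only [ite_mul, one_mul, zero_mul, Finset.sum_ite_eq', Finset.mem_univ, if_true]
    rw [Finset.mul_sum, ← Finset.sum_sub_distrib]
    refine Finset.sum_congr rfl fun j _ => ?_
    rw [hv j i, hc j i]
    ring
  rw [key]
  simp only [mul_ite, mul_one, mul_zero, Finset.sum_ite_eq', Finset.mem_univ, if_true]
  rw [softmax]
  ring
end
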